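/- Let 𝔐 = (V,⟨·,·⟩,A) be Jacobi–Tsankov and let x, y, w ∈ V satisfy ⟨J(x)J(y)w, w⟩ ≠ 0. Then the fourteen vectors w, x, y, J(x)J(y)w, J(x)w, J(y)w, J(x,y)w, J(y)J(w)x, J(y)x, J(w)x, J(y,w)x, J(w)J(x)y, J(w)y, J(x)y are linearly independent in V; in particular dim V ≥ 14. -/
import Mathlib


noncomputable section

/-- The Jacobi operator `J(x) : y ↦ 𝒜(y,x)x` of a (tri)linear curvature operator `𝒜`. -/
def jacobiOp {V : Type*} [AddCommGroup V] [Module ℝ V]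
    (Aop : V →ₗ[ℝ] V →ₗ[ℝ] V →ₗ[ℝ] V) (x : V) : V →ₗ[ℝ] V where
  toFun y := Aop y x x
  map_add' y z := by simp
  map_smul' c y := by simp

/-- The polarized Jacobi operator `J(x,y) : z ↦ ½(𝒜(z,x)y + 𝒜(z,y)x)`. -/
def jacobiPol {V : Type*} [AddCommGroup V] [Module ℝ V]
    (Aop : V →ₗ[ℝ] V →ₗ[ℝ] V →ₗ[ℝ] V) (x y : V) : V →ₗ[ℝ] V where
  toFun z := (1/2 : ℝ) • (Aop z x y + Aop z y x)
  map_add' a b := by simp [smul_add]; abel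
  map_smul' c a := by simp [smul_add, smul_comm c]

namespace JTaux

variable {V : Type*} [AddCommGroup V] [Module ℝ V]
variable (B : LinearMap.BilinForm ℝ V) (Aop : V →ₗ[ℝ] V →ₗ[ℝ] V →ₗ[ℝ] V)

lemma jOp (u a : V) : jacobiOp Aop u a = Aop a u u := rfl

lemma jPol (u v a : V) :
    jacobiPol Aop u v a = (1/2 : ℝ) • (Aop a u v + Aop a v u) := rfl

lemma aA1' (hBnd : ∀ x : V, (∀ y : V, B x y = 0) → x = 0)
    (hA1 : ∀ x y z w : V, B (Aop x y z) w = - B (Aop y x z) w)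
    (p q r : V) : Aop p q r = - Aop q p r := by
  have h := hBnd (Aop p q r + Aop q p r) (fun s => by
    rw [map_add, LinearMap.add_apply, hA1 p q r s]; ring)
  exact eq_neg_of_add_eq_zero_left h

lemma aA0 (hBnd : ∀ x : V, (∀ y : V, B x y = 0) → x = 0)
    (hA1 : ∀ x y z w : V, B (Aop x y z) w = - B (Aop y x z) w)
    (p r : V) : Aop p p r = 0 := by
  have h := aA1' B Aop hBnd hA1 p p r
  have h2 : (2:ℝ) • Aop p p r = 0 := by linear_combination (norm := module) h
  exact (smul_eq_zero.mp h2).resolve_left (by norm_num)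

lemma Juu (hBnd : ∀ x : V, (∀ y : V, B x y = 0) → x = 0)
    (hA1 : ∀ x y z w : V, B (Aop x y z) w = - B (Aop y x z) w)
    (u : V) : jacobiOp Aop u u = 0 := by
  rw [jOp]; exact aA0 B Aop hBnd hA1 u u

lemma JTapp (hJT : ∀ x y : V, jacobiOp Aop x ∘ₗ jacobiOp Aop y = jacobiOp Aop y ∘ₗ jacobiOp Aop x)
    (u v a : V) :
    jacobiOp Aop u (jacobiOp Aop v a) = jacobiOp Aop v (jacobiOp Aop u a) := by
  have := LinearMap.ext_iff.mp (hJT u v) a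
  simpa [LinearMap.comp_apply] using this

lemma Psymm (u v : V) : jacobiPol Aop u v = jacobiPol Aop v u := by
  ext a; simp [jPol, add_comm]

lemma Pux (hBnd : ∀ x : V, (∀ y : V, B x y = 0) → x = 0)
    (hA1 : ∀ x y z w : V, B (Aop x y z) w = - B (Aop y x z) w)
    (u v : V) : jacobiPol Aop u v u = (-(1/2) : ℝ) • jacobiOp Aop u v := by
  rw [jPol, jOp, aA0 B Aop hBnd hA1 u v, aA1' B Aop hBnd hA1 u v u]
  module

lemma JpolC (c : ℝ) (u v a : V) :
    jacobiOp Aop (u + c • v) a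
      = jacobiOp Aop u a + (2*c) • jacobiPol Aop u v a + (c^2) • jacobiOp Aop v a := by
  simp only [jOp, jPol, map_add, map_smul, LinearMap.add_apply, LinearMap.smul_apply]
  module

lemma PlinC (c : ℝ) (u z v a : V) :
    jacobiPol Aop (u + c • z) v a = jacobiPol Aop u v a + c • jacobiPol Aop z v a := by
  simp only [jPol, map_add, map_smul, LinearMap.add_apply, LinearMap.smul_apply]
  module

lemma PJcomm (hJT : ∀ x y : V, jacobiOp Aop x ∘ₗ jacobiOp Aop y = jacobiOp Aop y ∘ₗ jacobiOp Aop x)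
    (u v z a : V) :
    jacobiPol Aop u v (jacobiOp Aop z a) = jacobiOp Aop z (jacobiPol Aop u v a) := by
  have h := JTapp Aop hJT (u + (1:ℝ) • v) z a
  rw [JpolC Aop (1:ℝ) u v (jacobiOp Aop z a), JpolC Aop (1:ℝ) u v a] at h
  rw [map_add, map_add, map_smul, map_smul] at h
  have h2 : ((2:ℝ)) • jacobiPol Aop u v (jacobiOp Aop z a)
      = ((2:ℝ)) • jacobiOp Aop z (jacobiPol Aop u v a) := by
    linear_combination (norm := module) h - JTapp Aop hJT u z a - JTapp Aop hJT v z a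
  exact smul_right_injective V (by norm_num) h2


lemma Jsq (hBnd : ∀ x : V, (∀ y : V, B x y = 0) → x = 0)
    (hA1 : ∀ x y z w : V, B (Aop x y z) w = - B (Aop y x z) w)
    (hJT : ∀ x y : V, jacobiOp Aop x ∘ₗ jacobiOp Aop y = jacobiOp Aop y ∘ₗ jacobiOp Aop x)
    (u a : V) : jacobiOp Aop u (jacobiOp Aop u a) = 0 := by
  have h1 : jacobiOp Aop u a = (-2:ℝ) • jacobiPol Aop u a u := by
    rw [Pux B Aop hBnd hA1]; module
  rw [h1, map_smul, ← PJcomm Aop hJT u a u u, Juu B Aop hBnd hA1, map_zero, smul_zero]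

lemma keycube (hBnd : ∀ x : V, (∀ y : V, B x y = 0) → x = 0)
    (hA1 : ∀ x y z w : V, B (Aop x y z) w = - B (Aop y x z) w)
    (hJT : ∀ x y : V, jacobiOp Aop x ∘ₗ jacobiOp Aop y = jacobiOp Aop y ∘ₗ jacobiOp Aop x)
    (u v a : V) (c : ℝ) :
    (4*c) • jacobiOp Aop u (jacobiPol Aop u v a)
      + (2*c^2) • jacobiOp Aop u (jacobiOp Aop v a)
      + (4*c^2) • jacobiPol Aop u v (jacobiPol Aop u v a)
      + (4*c^3) • jacobiOp Aop v (jacobiPol Aop u v a) = 0 := by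
  have h := Jsq B Aop hBnd hA1 hJT (u + c • v) a
  simp only [JpolC Aop c u v, map_add, map_smul] at h
  linear_combination (norm := module) h - Jsq B Aop hBnd hA1 hJT u a
    - (c^4) • Jsq B Aop hBnd hA1 hJT v a
    - (2*c) • PJcomm Aop hJT u v u a
    - (2*c^3) • PJcomm Aop hJT u v v a
    - (c^2) • JTapp Aop hJT v u a

lemma JPz1 (hBnd : ∀ x : V, (∀ y : V, B x y = 0) → x = 0)
    (hA1 : ∀ x y z w : V, B (Aop x y z) w = - B (Aop y x z) w)
    (hJT : ∀ x y : V, jacobiOp Aop x ∘ₗ jacobiOp Aop y = jacobiOp Aop y ∘ₗ jacobiOp Aop x)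
    (u v a : V) : jacobiOp Aop u (jacobiPol Aop u v a) = 0 := by
  have e1 := keycube B Aop hBnd hA1 hJT u v a 1
  have e2 := keycube B Aop hBnd hA1 hJT u v a (-1)
  have e3 := keycube B Aop hBnd hA1 hJT u v a 2
  linear_combination (norm := module) (1/4:ℝ) • e1 - (1/12:ℝ) • e2 - (1/24:ℝ) • e3

lemma JPz2 (hBnd : ∀ x : V, (∀ y : V, B x y = 0) → x = 0)
    (hA1 : ∀ x y z w : V, B (Aop x y z) w = - B (Aop y x z) w)
    (hJT : ∀ x y : V, jacobiOp Aop x ∘ₗ jacobiOp Aop y = jacobiOp Aop y ∘ₗ jacobiOp Aop x)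
    (u v a : V) : jacobiOp Aop v (jacobiPol Aop u v a) = 0 := by
  have e1 := keycube B Aop hBnd hA1 hJT u v a 1
  have e2 := keycube B Aop hBnd hA1 hJT u v a (-1)
  have e3 := keycube B Aop hBnd hA1 hJT u v a 2
  linear_combination (norm := module) (-(1/8):ℝ) • e1 - (1/24:ℝ) • e2 + (1/24:ℝ) • e3

lemma PPsq (hBnd : ∀ x : V, (∀ y : V, B x y = 0) → x = 0)
    (hA1 : ∀ x y z w : V, B (Aop x y z) w = - B (Aop y x z) w)
    (hJT : ∀ x y : V, jacobiOp Aop x ∘ₗ jacobiOp Aop y = jacobiOp Aop y ∘ₗ jacobiOp Aop x)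
    (u v a : V) :
    jacobiPol Aop u v (jacobiPol Aop u v a)
      = (-(1/2) : ℝ) • jacobiOp Aop u (jacobiOp Aop v a) := by
  have e1 := keycube B Aop hBnd hA1 hJT u v a 1
  have e2 := keycube B Aop hBnd hA1 hJT u v a (-1)
  linear_combination (norm := module) (1/8:ℝ) • e1 + (1/8:ℝ) • e2

lemma JPz1' (hBnd : ∀ x : V, (∀ y : V, B x y = 0) → x = 0)
    (hA1 : ∀ x y z w : V, B (Aop x y z) w = - B (Aop y x z) w)
    (hJT : ∀ x y : V, jacobiOp Aop x ∘ₗ jacobiOp Aop y = jacobiOp Aop y ∘ₗ jacobiOp Aop x)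
    (u v a : V) : jacobiOp Aop u (jacobiPol Aop v u a) = 0 := by
  rw [Psymm Aop v u]; exact JPz1 B Aop hBnd hA1 hJT u v a

lemma PJzA (hBnd : ∀ x : V, (∀ y : V, B x y = 0) → x = 0)
    (hA1 : ∀ x y z w : V, B (Aop x y z) w = - B (Aop y x z) w)
    (hJT : ∀ x y : V, jacobiOp Aop x ∘ₗ jacobiOp Aop y = jacobiOp Aop y ∘ₗ jacobiOp Aop x)
    (u v a : V) : jacobiPol Aop u v (jacobiOp Aop u a) = 0 := by
  rw [PJcomm Aop hJT u v u a]; exact JPz1 B Aop hBnd hA1 hJT u v a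

lemma PJzB (hBnd : ∀ x : V, (∀ y : V, B x y = 0) → x = 0)
    (hA1 : ∀ x y z w : V, B (Aop x y z) w = - B (Aop y x z) w)
    (hJT : ∀ x y : V, jacobiOp Aop x ∘ₗ jacobiOp Aop y = jacobiOp Aop y ∘ₗ jacobiOp Aop x)
    (u v a : V) : jacobiPol Aop u v (jacobiOp Aop v a) = 0 := by
  rw [PJcomm Aop hJT u v v a]; exact JPz1' B Aop hBnd hA1 hJT v u a

lemma PPbase (hBnd : ∀ x : V, (∀ y : V, B x y = 0) → x = 0)
    (hA1 : ∀ x y z w : V, B (Aop x y z) w = - B (Aop y x z) w)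
    (hJT : ∀ x y : V, jacobiOp Aop x ∘ₗ jacobiOp Aop y = jacobiOp Aop y ∘ₗ jacobiOp Aop x)
    (u z t a : V) :
    jacobiPol Aop u z (jacobiPol Aop u t a)
      = (-(1/2) : ℝ) • jacobiOp Aop u (jacobiPol Aop z t a) := by
  have e : ∀ c : ℝ, jacobiOp Aop (u + c • z) (jacobiPol Aop (u + c • z) t a) = 0 :=
    fun c => JPz1 B Aop hBnd hA1 hJT (u + c • z) t a
  have e1 := e 1
  have e2 := e (-1)
  simp only [PlinC Aop (1:ℝ) u z t a, PlinC Aop (-1:ℝ) u z t a,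
    JpolC Aop (1:ℝ) u z, JpolC Aop (-1:ℝ) u z, map_add, map_smul] at e1 e2
  linear_combination (norm := module) (1/4:ℝ) • e1 - (1/4:ℝ) • e2
    - (1/2:ℝ) • JPz1 B Aop hBnd hA1 hJT z t a


lemma hA1b (hA1 : ∀ x y z w : V, B (Aop x y z) w = - B (Aop y x z) w)
    (hA2 : ∀ x y z w : V, B (Aop x y z) w = B (Aop z w x) y)
    (p q r s : V) : B (Aop p q r) s = - B (Aop p q s) r := by
  calc B (Aop p q r) s = B (Aop r s p) q := hA2 p q r s
    _ = - B (Aop s r p) q := hA1 r s p q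
    _ = - B (Aop p q s) r := by rw [hA2 s r p q]

lemma Jself (hA1 : ∀ x y z w : V, B (Aop x y z) w = - B (Aop y x z) w)
    (hA2 : ∀ x y z w : V, B (Aop x y z) w = B (Aop z w x) y)
    (u a b : V) : B (jacobiOp Aop u a) b = B (jacobiOp Aop u b) a := by
  simp only [jOp]
  calc B (Aop a u u) b = - B (Aop a u b) u := hA1b B Aop hA1 hA2 a u u b
    _ = - B (Aop b u a) u := by rw [hA2 a u b u]
    _ = B (Aop b u u) a := by rw [hA1b B Aop hA1 hA2 b u a u, neg_neg]

lemma hAswap (hA1 : ∀ x y z w : V, B (Aop x y z) w = - B (Aop y x z) w)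
    (hA2 : ∀ x y z w : V, B (Aop x y z) w = B (Aop z w x) y)
    (a u v b : V) : B (Aop a u v) b = B (Aop b v u) a := by
  calc B (Aop a u v) b = B (Aop v b a) u := hA2 a u v b
    _ = - B (Aop b v a) u := hA1 v b a u
    _ = B (Aop b v u) a := by rw [hA1b B Aop hA1 hA2 b v a u, neg_neg]

lemma Pself (hA1 : ∀ x y z w : V, B (Aop x y z) w = - B (Aop y x z) w)
    (hA2 : ∀ x y z w : V, B (Aop x y z) w = B (Aop z w x) y)
    (u v a b : V) : B (jacobiPol Aop u v a) b = B (jacobiPol Aop u v b) a := by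
  simp only [jPol, map_smul, map_add, LinearMap.smul_apply, LinearMap.add_apply, smul_eq_mul]
  rw [hAswap B Aop hA1 hA2 a u v b, hAswap B Aop hA1 hA2 a v u b]
  ring

lemma eps_cycle
    (hBsymm : ∀ x y : V, B x y = B y x)
    (hBnd : ∀ x : V, (∀ y : V, B x y = 0) → x = 0)
    (hA1 : ∀ x y z w : V, B (Aop x y z) w = - B (Aop y x z) w)
    (hA2 : ∀ x y z w : V, B (Aop x y z) w = B (Aop z w x) y)
    (hJT : ∀ x y : V, jacobiOp Aop x ∘ₗ jacobiOp Aop y = jacobiOp Aop y ∘ₗ jacobiOp Aop x)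
    (x y w : V) :
    B (jacobiOp Aop y (jacobiOp Aop w x)) x = B (jacobiOp Aop x (jacobiOp Aop y w)) w := by
  have key1 : B (jacobiPol Aop x y w) (jacobiPol Aop y w x)
      = (1/4 : ℝ) * B (jacobiOp Aop y (jacobiOp Aop w x)) x := by
    rw [hBsymm, Pself B Aop hA1 hA2 y w x (jacobiPol Aop x y w)]
    rw [Psymm Aop x y]
    rw [PPbase B Aop hBnd hA1 hJT y w x w]
    rw [Pux B Aop hBnd hA1 w x]
    simp only [map_smul, LinearMap.smul_apply, smul_eq_mul]
    ring
  have key2 : B (jacobiPol Aop x y w) (jacobiPol Aop y w x)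
      = (1/4 : ℝ) * B (jacobiOp Aop x (jacobiOp Aop y w)) w := by
    rw [Pself B Aop hA1 hA2 x y w (jacobiPol Aop y w x)]
    rw [Psymm Aop x y]
    rw [PPbase B Aop hBnd hA1 hJT y x w x]
    rw [Pux B Aop hBnd hA1 x w]
    simp only [map_smul, LinearMap.smul_apply, smul_eq_mul]
    rw [JTapp Aop hJT y x w]
    ring
  linarith [key1, key2]

lemma sum_univ_nine {M : Type*} [AddCommMonoid M] (f : Fin 9 → M) :
    ∑ i, f i = f 0 + f 1 + f 2 + f 3 + f 4 + f 5 + f 6 + f 7 + f 8 := by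
  rw [Fin.sum_univ_castSucc, Fin.sum_univ_eight]; rfl

lemma sum_univ_ten {M : Type*} [AddCommMonoid M] (f : Fin 10 → M) :
    ∑ i, f i = f 0 + f 1 + f 2 + f 3 + f 4 + f 5 + f 6 + f 7 + f 8 + f 9 := by
  rw [Fin.sum_univ_castSucc, sum_univ_nine]; rfl

lemma sum_univ_eleven {M : Type*} [AddCommMonoid M] (f : Fin 11 → M) :
    ∑ i, f i = f 0 + f 1 + f 2 + f 3 + f 4 + f 5 + f 6 + f 7 + f 8 + f 9 + f 10 := by
  rw [Fin.sum_univ_castSucc, sum_univ_ten]; rfl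

lemma sum_univ_twelve {M : Type*} [AddCommMonoid M] (f : Fin 12 → M) :
    ∑ i, f i = f 0 + f 1 + f 2 + f 3 + f 4 + f 5 + f 6 + f 7 + f 8 + f 9 + f 10 + f 11 := by
  rw [Fin.sum_univ_castSucc, sum_univ_eleven]; rfl

lemma sum_univ_thirteen {M : Type*} [AddCommMonoid M] (f : Fin 13 → M) :
    ∑ i, f i = f 0 + f 1 + f 2 + f 3 + f 4 + f 5 + f 6 + f 7 + f 8 + f 9 + f 10 + f 11 + f 12 := by
  rw [Fin.sum_univ_castSucc, sum_univ_twelve]; rfl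

lemma sum_univ_fourteen {M : Type*} [AddCommMonoid M] (f : Fin 14 → M) :
    ∑ i, f i = f 0 + f 1 + f 2 + f 3 + f 4 + f 5 + f 6 + f 7 + f 8 + f 9 + f 10 + f 11 + f 12 + f 13 := by
  rw [Fin.sum_univ_castSucc, sum_univ_thirteen]; rfl

end JTaux

open JTaux in
/-- If `𝔐 = (V,⟨·,·⟩,A)` is Jacobi–Tsankov and `⟨J(x)J(y)w,w⟩ ≠ 0`,
then the fourteen vectors `w, x, y, J(x)J(y)w, J(x)w, J(y)w, J(x,y)w, J(y)J(w)x,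
J(y)x, J(w)x, J(y,w)x, J(w)J(x)y, J(w)y, J(x)y` are linearly independent; in
particular `dim V ≥ 14`. -/
theorem jacobiTsankov_fourteen_independent
    {V : Type*} [AddCommGroup V] [Module ℝ V] [FiniteDimensional ℝ V]
    -- a nondegenerate symmetric bilinear form ⟨·,·⟩ on V
    (B : LinearMap.BilinForm ℝ V)
    (hBsymm : ∀ x y : V, B x y = B y x)
    (hBnd : ∀ x : V, (∀ y : V, B x y = 0) → x = 0)
    -- the curvature operator 𝒜, with `A x y z w = ⟨𝒜(x,y)z, w⟩`
    (Aop : V →ₗ[ℝ] V →ₗ[ℝ] V →ₗ[ℝ] V)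
    -- A(x,y,z,w) = -A(y,x,z,w)
    (hA1 : ∀ x y z w : V, B (Aop x y z) w = - B (Aop y x z) w)
    -- A(x,y,z,w) = A(z,w,x,y)
    (hA2 : ∀ x y z w : V, B (Aop x y z) w = B (Aop z w x) y)
    -- first Bianchi identity
    (hA3 : ∀ x y z w : V, B (Aop x y z) w + B (Aop y z x) w + B (Aop z x y) w = 0)
    -- 𝔐 is Jacobi–Tsankov
    (hJT : ∀ x y : V, jacobiOp Aop x ∘ₗ jacobiOp Aop y = jacobiOp Aop y ∘ₗ jacobiOp Aop x)
    (x y w : V) (hw : B (jacobiOp Aop x (jacobiOp Aop y w)) w ≠ 0) :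
    LinearIndependent ℝ
      ![w, x, y,
        jacobiOp Aop x (jacobiOp Aop y w), jacobiOp Aop x w, jacobiOp Aop y w,
        jacobiPol Aop x y w,
        jacobiOp Aop y (jacobiOp Aop w x), jacobiOp Aop y x, jacobiOp Aop w x,
        jacobiPol Aop y w x,
        jacobiOp Aop w (jacobiOp Aop x y), jacobiOp Aop w y, jacobiOp Aop x y] ∧
    14 ≤ Module.finrank ℝ V := by
  have juu := Juu B Aop hBnd hA1
  have jsq := Jsq B Aop hBnd hA1 hJT
  have jt := JTapp Aop hJT
  have jpz1 := JPz1 B Aop hBnd hA1 hJT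
  have jpz1' := JPz1' B Aop hBnd hA1 hJT
  have pjzA := PJzA B Aop hBnd hA1 hJT
  have pjzB := PJzB B Aop hBnd hA1 hJT
  have jself := Jself B Aop hA1 hA2
  have heps2 := eps_cycle B Aop hBsymm hBnd hA1 hA2 hJT x y w
  have heps3 := eps_cycle B Aop hBsymm hBnd hA1 hA2 hJT y w x
  -- basic vanishing facts
  have Kxyx : jacobiOp Aop x (jacobiOp Aop y x) = 0 := by rw [jt x y x, juu x, map_zero]
  have Kyxy : jacobiOp Aop y (jacobiOp Aop x y) = 0 := by rw [jt y x y, juu y, map_zero]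
  have Kxwx : jacobiOp Aop x (jacobiOp Aop w x) = 0 := by rw [jt x w x, juu x, map_zero]
  have Kwxw : jacobiOp Aop w (jacobiOp Aop x w) = 0 := by rw [jt w x w, juu w, map_zero]
  have Kywy : jacobiOp Aop y (jacobiOp Aop w y) = 0 := by rw [jt y w y, juu y, map_zero]
  have Kwyw : jacobiOp Aop w (jacobiOp Aop y w) = 0 := by rw [jt w y w, juu w, map_zero]
  have Z1 : jacobiOp Aop y (jacobiOp Aop x (jacobiOp Aop y w)) = 0 := by
    rw [jt y x (jacobiOp Aop y w), jsq y w, map_zero]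
  have Z2 : jacobiOp Aop x (jacobiOp Aop y (jacobiOp Aop x w)) = 0 := by
    rw [jt y x w]; exact jsq x (jacobiOp Aop y w)
  have Z3 : jacobiOp Aop x (jacobiOp Aop y (jacobiOp Aop w x)) = 0 := by
    rw [jt y w x, jt x w (jacobiOp Aop y x), Kxyx, map_zero]
  have Z4 : jacobiOp Aop y (jacobiOp Aop w (jacobiOp Aop x y)) = 0 := by
    rw [jt y w (jacobiOp Aop x y), Kyxy, map_zero]
  have Z5 : jacobiOp Aop w (jacobiOp Aop x (jacobiOp Aop y w)) = 0 := by
    rw [jt w x (jacobiOp Aop y w), Kwyw, map_zero]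
  have Z6 : jacobiOp Aop w (jacobiOp Aop y (jacobiOp Aop w x)) = 0 := by
    rw [jt w y (jacobiOp Aop w x), jsq w x, map_zero]
  have Z7 : jacobiOp Aop y (jacobiOp Aop w (jacobiOp Aop y x)) = 0 := by
    rw [jt w y x]; exact jsq y (jacobiOp Aop w x)
  have Z8 : jacobiOp Aop x (jacobiOp Aop w (jacobiOp Aop x y)) = 0 := by
    rw [jt x w (jacobiOp Aop x y), jsq x y, map_zero]
  have S1 : jacobiOp Aop x (jacobiOp Aop w y) = jacobiOp Aop w (jacobiOp Aop x y) := jt x w y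
  have S2 : jacobiOp Aop y (jacobiOp Aop x w) = jacobiOp Aop x (jacobiOp Aop y w) := jt y x w
  have S3 : jacobiOp Aop w (jacobiOp Aop y x) = jacobiOp Aop y (jacobiOp Aop w x) := jt w y x
  have W1 : jacobiOp Aop w (jacobiPol Aop x y w) = 0 := by
    rw [← PJcomm Aop hJT x y w w, juu w, map_zero]
  have W2 : jacobiOp Aop x (jacobiPol Aop y w x) = 0 := by
    rw [← PJcomm Aop hJT y w x x, juu x, map_zero]
  have W3 : jacobiPol Aop x y (jacobiOp Aop w (jacobiOp Aop x y)) = 0 := by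
    rw [PJcomm Aop hJT x y w, pjzA x y y, map_zero]
  have W4 : jacobiPol Aop y w (jacobiOp Aop x (jacobiOp Aop y w)) = 0 := by
    rw [PJcomm Aop hJT y w x, pjzA y w w, map_zero]
  have Q1 : jacobiPol Aop x y (jacobiPol Aop x y w)
      = (-(1/2) : ℝ) • jacobiOp Aop x (jacobiOp Aop y w) := PPsq B Aop hBnd hA1 hJT x y w
  have Q2 : jacobiPol Aop x y (jacobiPol Aop y w x)
      = (1/4 : ℝ) • jacobiOp Aop x (jacobiOp Aop y w) := by
    rw [Psymm Aop x y, PPbase B Aop hBnd hA1 hJT y x w x, Pux B Aop hBnd hA1 x w, map_smul,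
      jt y x w]
    module
  have Q3 : jacobiPol Aop y w (jacobiPol Aop x y w)
      = (1/4 : ℝ) • jacobiOp Aop y (jacobiOp Aop w x) := by
    rw [Psymm Aop x y, PPbase B Aop hBnd hA1 hJT y w x w, Pux B Aop hBnd hA1 w x, map_smul]
    module
  have Q4 : jacobiPol Aop y w (jacobiPol Aop y w x)
      = (-(1/2) : ℝ) • jacobiOp Aop y (jacobiOp Aop w x) := PPsq B Aop hBnd hA1 hJT y w x
  -- pairing facts
  have p3x : B (jacobiOp Aop x (jacobiOp Aop y w)) x = 0 := by
    rw [jself x (jacobiOp Aop y w) x, juu x]; simp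
  have p3y : B (jacobiOp Aop x (jacobiOp Aop y w)) y = 0 := by
    rw [jself x (jacobiOp Aop y w) y, hBsymm, jself y w (jacobiOp Aop x y), jt y x y, juu y]
    simp
  have p7w : B (jacobiOp Aop y (jacobiOp Aop w x)) w = 0 := by
    rw [jself y (jacobiOp Aop w x) w, hBsymm, jself w x (jacobiOp Aop y w), jt w y w, juu w]
    simp
  have p7y : B (jacobiOp Aop y (jacobiOp Aop w x)) y = 0 := by
    rw [jself y (jacobiOp Aop w x) y, juu y]; simp
  have p11w : B (jacobiOp Aop w (jacobiOp Aop x y)) w = 0 := by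
    rw [jself w (jacobiOp Aop x y) w, juu w]; simp
  have p11x : B (jacobiOp Aop w (jacobiOp Aop x y)) x = 0 := by
    rw [jself w (jacobiOp Aop x y) x, hBsymm, jself x y (jacobiOp Aop w x), jt x w x, juu x]
    simp
  have hli : LinearIndependent ℝ
      ![w, x, y,
        jacobiOp Aop x (jacobiOp Aop y w), jacobiOp Aop x w, jacobiOp Aop y w,
        jacobiPol Aop x y w,
        jacobiOp Aop y (jacobiOp Aop w x), jacobiOp Aop y x, jacobiOp Aop w x,
        jacobiPol Aop y w x,
        jacobiOp Aop w (jacobiOp Aop x y), jacobiOp Aop w y, jacobiOp Aop x y] := by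
    rw [Fintype.linearIndependent_iff]
    intro g hg
    rw [sum_univ_fourteen] at hg
    have hs : g 0 • w + g 1 • x + g 2 • y
        + g 3 • jacobiOp Aop x (jacobiOp Aop y w) + g 4 • jacobiOp Aop x w
        + g 5 • jacobiOp Aop y w + g 6 • jacobiPol Aop x y w
        + g 7 • jacobiOp Aop y (jacobiOp Aop w x) + g 8 • jacobiOp Aop y x
        + g 9 • jacobiOp Aop w x + g 10 • jacobiPol Aop y w x
        + g 11 • jacobiOp Aop w (jacobiOp Aop x y) + g 12 • jacobiOp Aop w y
        + g 13 • jacobiOp Aop x y = 0 := hg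
    have T1 := congrArg (fun v => B (jacobiOp Aop x (jacobiOp Aop y v)) w) hs
    simp only [map_add, map_smul, map_zero, LinearMap.add_apply, LinearMap.smul_apply,
      LinearMap.zero_apply, smul_eq_mul, Kxyx, Kyxy, Z1, Z2, Z3, Z4, Kywy, jsq, juu,
      jpz1, jpz1', mul_zero, add_zero, zero_add] at T1
    have h0 : g 0 = 0 := by
      have h' : g 0 * B (jacobiOp Aop x (jacobiOp Aop y w)) w = 0 := by linear_combination T1
      exact (mul_eq_zero.mp h').resolve_right hw
    have T2 := congrArg (fun v => B (jacobiOp Aop y (jacobiOp Aop w v)) x) hs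
    simp only [map_add, map_smul, map_zero, LinearMap.add_apply, LinearMap.smul_apply,
      LinearMap.zero_apply, smul_eq_mul, Kywy, Kwxw, Kwyw, Z4, Z5, Z6, Z7, W1, jsq, juu,
      jpz1, jpz1', heps2, mul_zero, add_zero, zero_add] at T2
    have h1 : g 1 = 0 := by
      have h' : g 1 * B (jacobiOp Aop x (jacobiOp Aop y w)) w = 0 := by linear_combination T2
      exact (mul_eq_zero.mp h').resolve_right hw
    have T3 := congrArg (fun v => B (jacobiOp Aop w (jacobiOp Aop x v)) y) hs
    simp only [map_add, map_smul, map_zero, LinearMap.add_apply, LinearMap.smul_apply,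
      LinearMap.zero_apply, smul_eq_mul, Kwxw, Kxyx, Kxwx, Z3, Z5, Z8, W2, S1, jsq, juu,
      jpz1, heps3, heps2, mul_zero, add_zero, zero_add] at T3
    have h2 : g 2 = 0 := by
      have h' : g 2 * B (jacobiOp Aop x (jacobiOp Aop y w)) w = 0 := by linear_combination T3
      exact (mul_eq_zero.mp h').resolve_right hw
    have T4a := congrArg (fun v => B (jacobiOp Aop x v) w) hs
    simp only [map_add, map_smul, map_zero, LinearMap.add_apply, LinearMap.smul_apply,
      LinearMap.zero_apply, smul_eq_mul, h0, h1, h2, juu, jsq, jpz1, Z3, Kxyx, Kxwx, W2, Z8,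
      S1, p11w, mul_zero, zero_mul, add_zero, zero_add] at T4a
    have h5 : g 5 = 0 := by
      have h' : g 5 * B (jacobiOp Aop x (jacobiOp Aop y w)) w = 0 := by linear_combination T4a
      exact (mul_eq_zero.mp h').resolve_right hw
    have T4b := congrArg (fun v => B (jacobiOp Aop x v) y) hs
    simp only [map_add, map_smul, map_zero, LinearMap.add_apply, LinearMap.smul_apply,
      LinearMap.zero_apply, smul_eq_mul, h0, h1, h2, juu, jsq, jpz1, Z3, Kxyx, Kxwx, W2, Z8,
      S1, p3y, heps3, heps2, mul_zero, zero_mul, add_zero, zero_add] at T4b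
    have h12 : g 12 = 0 := by
      have h' : g 12 * B (jacobiOp Aop x (jacobiOp Aop y w)) w = 0 := by linear_combination T4b
      exact (mul_eq_zero.mp h').resolve_right hw
    have T5a := congrArg (fun v => B (jacobiOp Aop y v) w) hs
    simp only [map_add, map_smul, map_zero, LinearMap.add_apply, LinearMap.smul_apply,
      LinearMap.zero_apply, smul_eq_mul, h0, h1, h2, juu, jsq, Z1, Z4, S2, Kywy, Kyxy,
      jpz1, jpz1', p7w, mul_zero, zero_mul, add_zero, zero_add] at T5a
    have h4 : g 4 = 0 := by
      have h' : g 4 * B (jacobiOp Aop x (jacobiOp Aop y w)) w = 0 := by linear_combination T5a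
      exact (mul_eq_zero.mp h').resolve_right hw
    have T5b := congrArg (fun v => B (jacobiOp Aop y v) x) hs
    simp only [map_add, map_smul, map_zero, LinearMap.add_apply, LinearMap.smul_apply,
      LinearMap.zero_apply, smul_eq_mul, h0, h1, h2, juu, jsq, Z1, Z4, S2, Kywy, Kyxy,
      jpz1, jpz1', p3x, heps2, mul_zero, zero_mul, add_zero, zero_add] at T5b
    have h9 : g 9 = 0 := by
      have h' : g 9 * B (jacobiOp Aop x (jacobiOp Aop y w)) w = 0 := by linear_combination T5b
      exact (mul_eq_zero.mp h').resolve_right hw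
    have T6a := congrArg (fun v => B (jacobiOp Aop w v) x) hs
    simp only [map_add, map_smul, map_zero, LinearMap.add_apply, LinearMap.smul_apply,
      LinearMap.zero_apply, smul_eq_mul, h0, h1, h2, juu, jsq, Z5, Z6, Kwxw, Kwyw, W1, S3,
      jpz1, jpz1', p11x, heps2, mul_zero, zero_mul, add_zero, zero_add] at T6a
    have h8 : g 8 = 0 := by
      have h' : g 8 * B (jacobiOp Aop x (jacobiOp Aop y w)) w = 0 := by linear_combination T6a
      exact (mul_eq_zero.mp h').resolve_right hw
    have T6b := congrArg (fun v => B (jacobiOp Aop w v) y) hs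
    simp only [map_add, map_smul, map_zero, LinearMap.add_apply, LinearMap.smul_apply,
      LinearMap.zero_apply, smul_eq_mul, h0, h1, h2, juu, jsq, Z5, Z6, Kwxw, Kwyw, W1, S3,
      jpz1, jpz1', p7y, heps3, heps2, mul_zero, zero_mul, add_zero, zero_add] at T6b
    have h13 : g 13 = 0 := by
      have h' : g 13 * B (jacobiOp Aop x (jacobiOp Aop y w)) w = 0 := by linear_combination T6b
      exact (mul_eq_zero.mp h').resolve_right hw
    have T7 := congrArg (fun v => B (jacobiPol Aop x y v) w) hs
    simp only [map_add, map_smul, map_zero, LinearMap.add_apply, LinearMap.smul_apply,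
      LinearMap.zero_apply, smul_eq_mul, h0, h1, h2, h4, h5, h8, h9, h12, h13,
      pjzA, pjzB, W3, Q1, Q2, mul_zero, zero_mul, add_zero, zero_add] at T7
    have T8 := congrArg (fun v => B (jacobiPol Aop y w v) x) hs
    simp only [map_add, map_smul, map_zero, LinearMap.add_apply, LinearMap.smul_apply,
      LinearMap.zero_apply, smul_eq_mul, h0, h1, h2, h4, h5, h8, h9, h12, h13,
      pjzA, pjzB, W4, Q3, Q4, heps2, mul_zero, zero_mul, add_zero, zero_add] at T8
    have rel1 : (-(1/2) * g 6 + (1/4) * g 10) * B (jacobiOp Aop x (jacobiOp Aop y w)) w = 0 := by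
      linear_combination T7
    have rel2 : ((1/4) * g 6 + (-(1/2)) * g 10) * B (jacobiOp Aop x (jacobiOp Aop y w)) w = 0 := by
      linear_combination T8
    have r1 := (mul_eq_zero.mp rel1).resolve_right hw
    have r2 := (mul_eq_zero.mp rel2).resolve_right hw
    have h6 : g 6 = 0 := by linarith
    have h10 : g 10 = 0 := by linarith
    have T9a := congrArg (fun v => B v w) hs
    simp only [map_add, map_smul, map_zero, LinearMap.add_apply, LinearMap.smul_apply,
      LinearMap.zero_apply, smul_eq_mul, h0, h1, h2, h4, h5, h6, h8, h9, h10, h12, h13,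
      p7w, p11w, mul_zero, zero_mul, add_zero, zero_add] at T9a
    have h3 : g 3 = 0 := by
      have h' : g 3 * B (jacobiOp Aop x (jacobiOp Aop y w)) w = 0 := by linear_combination T9a
      exact (mul_eq_zero.mp h').resolve_right hw
    have T9b := congrArg (fun v => B v x) hs
    simp only [map_add, map_smul, map_zero, LinearMap.add_apply, LinearMap.smul_apply,
      LinearMap.zero_apply, smul_eq_mul, h0, h1, h2, h4, h5, h6, h8, h9, h10, h12, h13,
      p3x, p11x, heps2, mul_zero, zero_mul, add_zero, zero_add] at T9b
    have h7 : g 7 = 0 := by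
      have h' : g 7 * B (jacobiOp Aop x (jacobiOp Aop y w)) w = 0 := by linear_combination T9b
      exact (mul_eq_zero.mp h').resolve_right hw
    have T9c := congrArg (fun v => B v y) hs
    simp only [map_add, map_smul, map_zero, LinearMap.add_apply, LinearMap.smul_apply,
      LinearMap.zero_apply, smul_eq_mul, h0, h1, h2, h4, h5, h6, h8, h9, h10, h12, h13,
      p3y, p7y, heps3, heps2, mul_zero, zero_mul, add_zero, zero_add] at T9c
    have h11 : g 11 = 0 := by
      have h' : g 11 * B (jacobiOp Aop x (jacobiOp Aop y w)) w = 0 := by linear_combination T9c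
      exact (mul_eq_zero.mp h').resolve_right hw
    intro i
    fin_cases i
    exacts [h0, h1, h2, h3, h4, h5, h6, h7, h8, h9, h10, h11, h12, h13]
  refine ⟨hli, ?_⟩
  simpa using hli.fintype_card_le_finrank
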